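/- Let k ≥ 2 and ε > 0, and let q_{i1},...,q_{ik} be positive reals such that q_{ij}/min_{j'} q_{ij'} ∈ {1, e^ε} for all j, and set q_i = (1/k) Σ_j q_{ij}. Let d* = argmin_{1 ≤ d ≤ k−1} (d e^ε + k − d)²/(d(k−d)). Then Σ_{j=1}^k (q_{ij}/q_i)² ≤ k (1 + (e^ε − 1)² · d*(k−d*)/(d* e^ε + k − d*)²). -/

import Mathlib

open Finset

theorem sum_sq_ratio_le (k : ℕ) (hk : 2 ≤ k) (ε : ℝ) (hε : 0 < ε)
    (q : Fin k → ℝ) (hq : ∀ j, 0 < q j)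
    (hratio : ∀ j, q j / (Finset.univ.inf' ⟨⟨0, by omega⟩, Finset.mem_univ _⟩ q) = 1 ∨
      q j / (Finset.univ.inf' ⟨⟨0, by omega⟩, Finset.mem_univ _⟩ q) = Real.exp ε)
    (dstar : ℕ) (hd1 : 1 ≤ dstar) (hd2 : dstar ≤ k - 1)
    (hdmin : ∀ d : ℕ, 1 ≤ d → d ≤ k - 1 →
      ((dstar : ℝ) * Real.exp ε + k - dstar)^2 / ((dstar : ℝ) * (k - dstar)) ≤
        ((d : ℝ) * Real.exp ε + k - d)^2 / ((d : ℝ) * (k - d))) :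
    ∑ j, (q j / ((1 / (k : ℝ)) * ∑ j', q j'))^2 ≤
      (k : ℝ) * (1 + (Real.exp ε - 1)^2 *
        ((dstar : ℝ) * ((k : ℝ) - dstar) / ((dstar : ℝ) * Real.exp ε + k - dstar)^2)) := by
  classical
  have hne : (Finset.univ : Finset (Fin k)).Nonempty := ⟨⟨0, by omega⟩, Finset.mem_univ _⟩
  set E := Real.exp ε with hEdef
  have hE1 : 1 < E := by
    rw [hEdef, show (1:ℝ) = Real.exp 0 by simp]
    exact Real.exp_lt_exp.mpr hε
  have hE0 : 0 < E := lt_trans one_pos hE1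
  obtain ⟨j0, -, hj0⟩ := Finset.exists_mem_eq_inf' hne q
  set m := Finset.univ.inf' hne q with hmdef
  have hm0 : 0 < m := by rw [hj0]; exact hq j0
  have hcases : ∀ j, q j = m ∨ q j = m * E := by
    intro j
    have h : q j / m = 1 ∨ q j / m = E := hratio j
    rcases h with h | h
    · left; exact (div_eq_one_iff_eq (ne_of_gt hm0)).mp h
    · right; rw [div_eq_iff (ne_of_gt hm0)] at h; linarith [h]
  set S := Finset.univ.filter (fun j => q j = m * E) with hS
  set d := S.card with hd
  have hj0m : q j0 = m := hmdef ▸ hj0.symm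
  have hj0nS : j0 ∉ S := by
    intro hmem
    rw [hS, Finset.mem_filter] at hmem
    have := hmem.2
    nlinarith [this, hj0m]
  have hdk : d < k := by
    have hss : S ⊂ Finset.univ := by
      rw [Finset.ssubset_iff_of_subset (Finset.subset_univ S)]
      exact ⟨j0, Finset.mem_univ _, hj0nS⟩
    have := Finset.card_lt_card hss
    simpa using this
  have hcompl : ∀ j ∈ Finset.univ.filter (fun j => ¬ q j = m * E), q j = m := by
    intro j hj
    rw [Finset.mem_filter] at hj
    rcases hcases j with h | h
    · exact h
    · exact absurd h hj.2
  have hcardc : (Finset.univ.filter (fun j => ¬ q j = m * E)).card = k - d := by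
    have := Finset.card_filter_add_card_filter_not (s := (Finset.univ : Finset (Fin k)))
      (p := fun j => q j = m * E)
    rw [← hS, ← hd] at this
    simp at this ⊢
    omega
  have hsplit : ∀ f : Fin k → ℝ, ∑ j, f j = ∑ j ∈ S, f j +
      ∑ j ∈ Finset.univ.filter (fun j => ¬ q j = m * E), f j := by
    intro f
    rw [hS]
    exact (Finset.sum_filter_add_sum_filter_not _ _ f).symm
  have hSmem : ∀ j ∈ S, q j = m * E := by
    intro j hj
    exact (Finset.mem_filter.mp hj).2
  have hsum : ∑ j, q j = d * (m * E) + ((k : ℝ) - d) * m := by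
    rw [hsplit q]
    have e1 : ∑ j ∈ S, q j = d * (m * E) := by
      rw [Finset.sum_congr rfl hSmem, Finset.sum_const, nsmul_eq_mul]
    have e2 : ∑ j ∈ Finset.univ.filter (fun j => ¬ q j = m * E), q j = ((k:ℝ) - d) * m := by
      rw [Finset.sum_congr rfl hcompl, Finset.sum_const, hcardc, nsmul_eq_mul,
        Nat.cast_sub hdk.le]
    rw [e1, e2]
  have hsumsq : ∑ j, (q j)^2 = d * (m * E)^2 + ((k : ℝ) - d) * m^2 := by
    rw [hsplit (fun j => (q j)^2)]
    have e1 : ∑ j ∈ S, (q j)^2 = d * (m * E)^2 := by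
      rw [Finset.sum_congr rfl (fun j hj => by rw [hSmem j hj]),
        Finset.sum_const, nsmul_eq_mul]
    have e2 : ∑ j ∈ Finset.univ.filter (fun j => ¬ q j = m * E), (q j)^2
        = ((k:ℝ) - d) * m^2 := by
      rw [Finset.sum_congr rfl (fun j hj => by rw [hcompl j hj]),
        Finset.sum_const, hcardc, nsmul_eq_mul, Nat.cast_sub hdk.le]
    rw [e1, e2]
  set A : ℝ := d * E + ((k : ℝ) - d) with hA
  have hkd : (0:ℝ) < (k : ℝ) - d := by
    have : (d : ℝ) < k := by exact_mod_cast hdk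
    linarith
  have hA0 : 0 < A := by
    have : (0:ℝ) ≤ (d : ℝ) * E := by positivity
    rw [hA]; linarith
  set As : ℝ := (dstar : ℝ) * E + ((k : ℝ) - dstar) with hAs
  have hds : dstar < k := by omega
  have hkds : (0:ℝ) < (k : ℝ) - dstar := by
    have : (dstar : ℝ) < k := by exact_mod_cast hds
    linarith
  have hds0 : (0:ℝ) < (dstar : ℝ) := by exact_mod_cast hd1
  have hAs0 : 0 < As := by
    have : (0:ℝ) ≤ (dstar : ℝ) * E := by positivity
    rw [hAs]; linarith
  have hk0 : (0:ℝ) < k := by positivity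
  -- key comparison
  have key : (d : ℝ) * ((k : ℝ) - d) / A^2 ≤ (dstar : ℝ) * ((k : ℝ) - dstar) / As^2 := by
    rcases Nat.eq_zero_or_pos d with h0 | h1
    · rw [h0]; push_cast
      rw [zero_mul, zero_div]
      exact div_nonneg (le_of_lt (mul_pos hds0 hkds)) (le_of_lt (pow_pos hAs0 2))
    · have hmin := hdmin d h1 (by omega)
      have hAeq : ((d : ℝ) * E + (k : ℝ) - d) = A := by rw [hA]; ring
      have hAseq : ((dstar : ℝ) * E + (k : ℝ) - dstar) = As := by rw [hAs]; ring
      rw [hAeq, hAseq] at hmin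
      have hd0' : (0:ℝ) < (d:ℝ) := by exact_mod_cast h1
      have hx : (0:ℝ) < (dstar : ℝ) * ((k : ℝ) - dstar) := mul_pos hds0 hkds
      have hy : (0:ℝ) < (d : ℝ) * ((k : ℝ) - d) := mul_pos hd0' hkd
      rw [div_le_div_iff₀ hx hy] at hmin
      rw [div_le_div_iff₀ (pow_pos hA0 2) (pow_pos hAs0 2),
        mul_comm ((d:ℝ) * ((k:ℝ) - d)) (As^2),
        mul_comm ((dstar:ℝ) * ((k:ℝ) - dstar)) (A^2)] at *
      exact hmin
  clear hdmin hratio hcases hcompl hSmem hsplit hj0 hj0m hj0nS hcardc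
  clear_value E m S d A As
  -- rewrite LHS
  have hQ : (1 / (k : ℝ)) * ∑ j', q j' = m * A / k := by
    rw [hsum, hA]; field_simp
  have hQ0 : 0 < m * A / k := div_pos (mul_pos hm0 hA0) hk0
  have hlhs : ∑ j, (q j / ((1 / (k : ℝ)) * ∑ j', q j'))^2
      = (k:ℝ)^2 * (d * E^2 + ((k:ℝ) - d)) / A^2 := by
    rw [hQ]
    have : ∀ j, (q j / (m * A / k))^2 = (q j)^2 * ((k:ℝ)^2 / (m^2 * A^2)) := by
      intro j
      field_simp
    rw [Finset.sum_congr rfl (fun j _ => this j), ← Finset.sum_mul, hsumsq]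
    field_simp
  rw [hlhs]
  -- identity: k * (d E^2 + (k - d)) = A^2 + (E-1)^2 * d (k - d)
  have hid : (k:ℝ) * ((d:ℝ) * E^2 + ((k:ℝ) - d)) = A^2 + (E-1)^2 * ((d:ℝ) * ((k:ℝ) - d)) := by
    rw [hA]; ring
  have hexp : (k:ℝ)^2 * (d * E^2 + ((k:ℝ) - d)) / A^2
      = (k:ℝ) * (1 + (E-1)^2 * ((d:ℝ) * ((k:ℝ) - d) / A^2)) := by
    have hA2 : A^2 ≠ 0 := ne_of_gt (pow_pos hA0 2)
    field_simp
    linear_combination hid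
  rw [hexp]
  have hAseq : ((dstar : ℝ) * E + (k : ℝ) - dstar) = As := by rw [hAs]; ring
  rw [hAseq]
  have hmono : (E-1)^2 * ((d:ℝ) * ((k:ℝ) - d) / A^2)
      ≤ (E-1)^2 * ((dstar:ℝ) * ((k:ℝ) - dstar) / As^2) := by
    apply mul_le_mul_of_nonneg_left key (by positivity)
  have h1 : 1 + (E-1)^2 * ((d:ℝ) * ((k:ℝ) - d) / A^2)
      ≤ 1 + (E-1)^2 * ((dstar:ℝ) * ((k:ℝ) - dstar) / As^2) := by linarith
  exact mul_le_mul_of_nonneg_left h1 hk0.le
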